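/- Let n ≥ 3 and consider triples of 'red' labels r_{ij} indexed by pairs i,j from a set B, with the consistency condition: a triple (r_{ij}, r_{j'k'}, r_{i*k*}) is forbidden unless i = i*, j = j', and k' = k*. Then the relation on red labels given by 'the triple is allowed' defines, on any clique all of whose edges are labelled by reds, a consistent assignment if and only if there is a single function f from the clique's vertices to B such that the edge (x,y) is labelled r_{f(x),f(y)}. -/
import Mathlib


/-- Characterization of consistent red cliques. A clique with all edges labelled by
reds `r_{ij}` (the label of edge `(x,y)` coded as the pair `L x y ∈ B × B`, with the
symmetry `L y x = (j, i)` when `L x y = (i, j)`) is consistent — every triangle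
`(r_{ij}, r_{jk}, r_{ik})` is allowed, i.e. the indices match — if and only if the
labelling is induced by a single vertex colouring `f : V → B` with edge `(x, y)`
labelled `r_{f x, f y}`. -/
theorem red_clique_consistent_iff_colouring {V B : Type*} (L : V → V → B × B)
    (hsym : ∀ x y : V, x ≠ y → L y x = ((L x y).2, (L x y).1)) :
    ((∀ x y z : V, x ≠ y → y ≠ z → x ≠ z →
        ((L x y).1 = (L x z).1 ∧ (L x y).2 = (L y z).1 ∧ (L y z).2 = (L x z).2)) ↔
      ∃ f : V → B, ∀ x y : V, x ≠ y → L x y = (f x, f y)) := by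
  constructor
  · intro H
    -- key lemma: (L x y).1 depends only on x (for y ≠ x)
    have key : ∀ x y z : V, x ≠ y → x ≠ z → (L x y).1 = (L x z).1 := by
      intro x y z hxy hxz
      by_cases hyz : y = z
      · subst hyz; rfl
      · exact (H x y z hxy hyz hxz).1
    by_cases hex : ∃ a b : V, a ≠ b
    · obtain ⟨a, b, hab⟩ := hex
      classical
      refine ⟨fun x => if h : x = a then (L a b).1 else (L x a).1, ?_⟩
      intro x y hxy
      have h1 : ∀ u v : V, u ≠ v → (L u v).1 = if h : u = a then (L a b).1 else (L u a).1 := by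
        intro u v huv
        by_cases hua : u = a
        · simp only [dif_pos hua]; subst hua; exact key u v b huv hab
        · simp only [dif_neg hua]; exact key u v a huv hua
      have h2 : (L x y).2 = (L y x).1 := by rw [hsym x y hxy]
      have := h1 x y hxy
      have := h1 y x (Ne.symm hxy)
      ext
      · simpa using h1 x y hxy
      · simp only [h2]; simpa using h1 y x (Ne.symm hxy)
    · push_neg at hex
      exact ⟨fun x => (L x x).1, fun x y hxy => absurd (hex x y) hxy⟩
  · rintro ⟨f, hf⟩ x y z hxy hyz hxz
    rw [hf x y hxy, hf y z hyz, hf x z hxz]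
    exact ⟨rfl, rfl, rfl⟩
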